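/- Let p_1, ..., p_{r-1} be distinct primes and p_r a prime distinct from all of them. Then √p_r ∉ Q(√p_1, ..., √p_{r-1}); in particular Q(√p_1,...,√p_{r-1}) ∩ Q(√p_r) = Q. -/

import Mathlib

open IntermediateField

private lemma natCast_memK (K : IntermediateField ℚ ℝ) (n : ℕ) : (n : ℝ) ∈ K := by
  have := K.algebraMap_mem (n : ℚ)
  simpa using this

/-- The quadratic subfield K(d) with d^2 ∈ K, as explicit x + y*d forms. -/
private noncomputable def quadSf (K : IntermediateField ℚ ℝ) (d : ℝ) (hd : d ^ 2 ∈ K) (hdK : d ∉ K) :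
    Subfield ℝ where
  carrier := {z | ∃ x ∈ K, ∃ y ∈ K, z = x + y * d}
  zero_mem' := ⟨0, K.zero_mem, 0, K.zero_mem, by ring⟩
  one_mem' := ⟨1, K.one_mem, 0, K.zero_mem, by ring⟩
  add_mem' := by
    rintro z w ⟨x, hx, y, hy, rfl⟩ ⟨x', hx', y', hy', rfl⟩
    exact ⟨x + x', K.add_mem hx hx', y + y', K.add_mem hy hy', by ring⟩
  neg_mem' := by
    rintro z ⟨x, hx, y, hy, rfl⟩
    exact ⟨-x, K.neg_mem hx, -y, K.neg_mem hy, by ring⟩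
  mul_mem' := by
    rintro z w ⟨x, hx, y, hy, rfl⟩ ⟨x', hx', y', hy', rfl⟩
    exact ⟨x * x' + y * y' * d ^ 2, K.add_mem (K.mul_mem hx hx')
      (K.mul_mem (K.mul_mem hy hy') hd),
      x * y' + y * x', K.add_mem (K.mul_mem hx hy') (K.mul_mem hy hx'), by ring⟩
  inv_mem' := by
    rintro z ⟨x, hx, y, hy, rfl⟩
    by_cases hz : x + y * d = 0
    · rw [hz, inv_zero]
      exact ⟨0, K.zero_mem, 0, K.zero_mem, by ring⟩
    · have hden : x ^ 2 - y ^ 2 * d ^ 2 ≠ 0 := by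
        intro h0
        by_cases hy0 : y = 0
        · apply hz
          have hx2 : x ^ 2 = 0 := by rw [hy0] at h0; linarith
          have : x = 0 := by nlinarith [sq_nonneg x]
          rw [this, hy0]; ring
        · have h2 : (x / y - d) * (x / y + d) = 0 := by
            field_simp
            linear_combination h0
          rcases mul_eq_zero.mp h2 with h3 | h3
          · exact hdK (by
              have : d = x / y := by linarith
              rw [this]; exact K.div_mem hx hy)
          · exact hdK (by
              have : d = -(x / y) := by linarith
              rw [this]; exact K.neg_mem (K.div_mem hx hy))
      have hmul : (x + y * d) * ((x - y * d) / (x ^ 2 - y ^ 2 * d ^ 2)) = 1 := by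
        field_simp
        ring
      have hinv : (x + y * d)⁻¹ = (x - y * d) / (x ^ 2 - y ^ 2 * d ^ 2) :=
        inv_eq_of_mul_eq_one_right hmul
      refine ⟨x / (x ^ 2 - y ^ 2 * d ^ 2),
        K.div_mem hx (K.sub_mem (K.pow_mem hx 2) (K.mul_mem (K.pow_mem hy 2) hd)),
        -(y / (x ^ 2 - y ^ 2 * d ^ 2)),
        K.neg_mem (K.div_mem hy (K.sub_mem (K.pow_mem hx 2) (K.mul_mem (K.pow_mem hy 2) hd))),
        ?_⟩
      rw [hinv, neg_mul, ← sub_eq_add_neg, div_mul_eq_mul_div, ← sub_div]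
      rfl

private lemma quad (K : IntermediateField ℚ ℝ) (d : ℝ) (hd : d ^ 2 ∈ K) (hdK : d ∉ K)
    {z : ℝ} (hz : z ∈ K ⊔ IntermediateField.adjoin ℚ {d}) :
    ∃ x ∈ K, ∃ y ∈ K, z = x + y * d := by
  let S : IntermediateField ℚ ℝ := (quadSf K d hd hdK).toIntermediateField
    (fun x => ⟨algebraMap ℚ ℝ x, K.algebraMap_mem x, 0, K.zero_mem, by ring⟩)
  have hle : K ⊔ IntermediateField.adjoin ℚ {d} ≤ S := by
    apply sup_le
    · intro w hw
      exact ⟨w, hw, 0, K.zero_mem, by ring⟩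
    · rw [IntermediateField.adjoin_le_iff]
      intro w hw
      rw [Set.mem_singleton_iff] at hw
      exact ⟨0, K.zero_mem, 1, K.one_mem, by rw [hw]; ring⟩
  exact hle hz

private lemma key : ∀ (s : Finset ℕ), (∀ p ∈ s, Nat.Prime p) →
    ∀ m : ℕ, Squarefree m →
      Real.sqrt m ∈ IntermediateField.adjoin ℚ ((fun n : ℕ => Real.sqrt n) '' ↑s) →
      ∀ l, l.Prime → l ∣ m → l ∈ s := by
  classical
  intro s
  induction s using Finset.induction_on with
  | empty =>
    intro _ m hm hmem l hl hld
    exfalso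
    simp only [Finset.coe_empty, Set.image_empty, IntermediateField.adjoin_empty] at hmem
    rw [IntermediateField.mem_bot] at hmem
    obtain ⟨x, hx⟩ := hmem
    have hnotirr : ¬ Irrational (Real.sqrt m) := by
      rw [Irrational]
      push_neg
      exact ⟨x, by simpa using hx⟩
    have hsq : IsSquare m := by
      by_contra hns
      exact hnotirr (irrational_sqrt_natCast_iff.mpr hns)
    obtain ⟨k, hk⟩ := hsq
    have : IsUnit k := hm k (by rw [hk])
    have hm1 : m = 1 := by rw [hk, Nat.isUnit_iff.mp this]
    rw [hm1] at hld
    exact hl.ne_one (Nat.dvd_one.mp hld)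
  | @insert a s ha ih =>
    intro hp' m hm hmem l hl hld
    have hpa : a.Prime := hp' a (Finset.mem_insert_self a s)
    have hps : ∀ p ∈ s, Nat.Prime p := fun p hp => hp' p (Finset.mem_insert_of_mem hp)
    have hpre := ih hps
    set K := IntermediateField.adjoin ℚ ((fun n : ℕ => Real.sqrt n) '' ↑s) with hK
    have haK : Real.sqrt a ∉ K := by
      intro h
      exact ha (hpre a hpa.squarefree h a hpa dvd_rfl)
    have hd : (Real.sqrt a) ^ 2 ∈ K := by
      rw [Real.sq_sqrt (Nat.cast_nonneg a)]
      exact natCast_memK K a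
    have hsplit : IntermediateField.adjoin ℚ ((fun n : ℕ => Real.sqrt n) '' ↑(insert a s))
        = K ⊔ IntermediateField.adjoin ℚ {Real.sqrt a} := by
      rw [Finset.coe_insert, Set.image_insert_eq, Set.insert_eq,
        IntermediateField.adjoin_union, sup_comm]
    rw [hsplit] at hmem
    obtain ⟨x, hx, y, hy, hxy⟩ := quad K _ hd haK hmem
    have hm2 : (x + y * Real.sqrt a) ^ 2 = (m : ℝ) := by
      rw [← hxy, Real.sq_sqrt (Nat.cast_nonneg m)]
    have ha2 : (Real.sqrt a) ^ 2 = (a : ℝ) := Real.sq_sqrt (Nat.cast_nonneg a)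
    by_cases hx0 : x = 0
    · -- √m = y √a
      have hym : Real.sqrt m = y * Real.sqrt a := by rw [hxy, hx0]; ring
      by_cases had : a ∣ m
      · obtain ⟨c, rfl⟩ := had
        have hc : Squarefree c := hm.squarefree_of_dvd ⟨a, mul_comm a c⟩
        have hsa : Real.sqrt a ≠ 0 := by
          have : (0:ℝ) < a := by exact_mod_cast hpa.pos
          positivity
        have hsplit2 : Real.sqrt ((a * c : ℕ) : ℝ) = Real.sqrt a * Real.sqrt c := by
          push_cast
          exact Real.sqrt_mul (Nat.cast_nonneg a) c
        have hyc : Real.sqrt c = y := by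
          have h1 : Real.sqrt a * Real.sqrt c = y * Real.sqrt a := by
            rw [← hsplit2]; exact hym
          field_simp at h1
          exact mul_right_cancel₀ hsa (by linarith)
        have hcs := hpre c hc (hyc ▸ hy)
        rcases (Nat.Prime.dvd_mul hl).mp hld with h | h
        · rw [(Nat.prime_dvd_prime_iff_eq hl hpa).mp h]
          exact Finset.mem_insert_self a s
        · exact Finset.mem_insert_of_mem (hcs l hl h)
      · exfalso
        have hcop : Nat.Coprime m a := (Nat.coprime_comm.mp (hpa.coprime_iff_not_dvd.mpr had))
        have hsqma : Squarefree (m * a) := (Nat.squarefree_mul hcop).mpr ⟨hm, hpa.squarefree⟩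
        have hma : Real.sqrt ((m * a : ℕ) : ℝ) = y * (a : ℝ) := by
          push_cast
          rw [Real.sqrt_mul (Nat.cast_nonneg m), hym]
          rw [mul_assoc, Real.mul_self_sqrt (Nat.cast_nonneg a)]
        have hmemK : Real.sqrt ((m * a : ℕ) : ℝ) ∈ K := by
          rw [hma]; exact K.mul_mem hy (natCast_memK K a)
        exact ha (hpre (m * a) hsqma hmemK a hpa ⟨m, mul_comm m a⟩)
    · by_cases hy0 : y = 0
      · have : Real.sqrt m ∈ K := by rw [hxy, hy0]; simpa using hx
        exact Finset.mem_insert_of_mem (hpre m hm this l hl hld)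
      · exfalso
        apply haK
        have key2 : 2 * x * y * Real.sqrt a = (m : ℝ) - x ^ 2 - y ^ 2 * a := by
          linear_combination hm2 - y ^ 2 * ha2
        have h2xy : (2 : ℝ) * x * y ≠ 0 := mul_ne_zero (mul_ne_zero two_ne_zero hx0) hy0
        have hsa : Real.sqrt a = ((m : ℝ) - x ^ 2 - y ^ 2 * a) / (2 * x * y) := by
          rw [eq_div_iff h2xy]
          linear_combination key2
        have h2K : (2 : ℝ) ∈ K := by simpa using natCast_memK K 2
        rw [hsa]
        exact K.div_mem
          (K.sub_mem (K.sub_mem (natCast_memK K m) (K.pow_mem hx 2))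
            (K.mul_mem (K.pow_mem hy 2) (natCast_memK K a)))
          (K.mul_mem (K.mul_mem h2K hx) hy)
  
theorem stmt4 (r : ℕ) (p : Fin r → ℕ) (hp : ∀ i, Nat.Prime (p i))
    (hinj : Function.Injective p)
    (q : ℕ) (hq : q.Prime) (hqp : ∀ i, q ≠ p i) :
    Real.sqrt q ∉ IntermediateField.adjoin ℚ (Set.range fun i => Real.sqrt (p i)) ∧
    IntermediateField.adjoin ℚ (Set.range fun i => Real.sqrt (p i)) ⊓
      IntermediateField.adjoin ℚ {Real.sqrt (q : ℝ)} = ⊥ := by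
  classical
  have hrange : (Set.range fun i => Real.sqrt (p i))
      = (fun n : ℕ => Real.sqrt n) '' ↑(Finset.image p Finset.univ) := by
    rw [Finset.coe_image, Finset.coe_univ, Set.image_univ, ← Set.range_comp]
    rfl
  set s := Finset.image p Finset.univ with hsdef
  have hs : ∀ t ∈ s, Nat.Prime t := by
    intro t ht
    obtain ⟨i, _, rfl⟩ := Finset.mem_image.mp ht
    exact hp i
  have part1 : Real.sqrt q ∉ IntermediateField.adjoin ℚ
      (Set.range fun i => Real.sqrt (p i)) := by
    intro h
    rw [hrange] at h
    have := key s hs q hq.squarefree h q hq dvd_rfl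
    obtain ⟨i, _, hi⟩ := Finset.mem_image.mp this
    exact hqp i hi.symm
  refine ⟨part1, ?_⟩
  apply le_antisymm _ bot_le
  intro z hz
  rw [IntermediateField.mem_inf] at hz
  obtain ⟨hz1, hz2⟩ := hz
  have hqirr : Real.sqrt q ∉ (⊥ : IntermediateField ℚ ℝ) := by
    rw [IntermediateField.mem_bot]
    rintro ⟨x, hx⟩
    exact hq.irrational_sqrt ⟨x, by simpa using hx⟩
  have hd : (Real.sqrt q) ^ 2 ∈ (⊥ : IntermediateField ℚ ℝ) := by
    rw [Real.sq_sqrt (Nat.cast_nonneg q)]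
    exact natCast_memK ⊥ q
  have hz2' : z ∈ (⊥ : IntermediateField ℚ ℝ) ⊔ IntermediateField.adjoin ℚ {Real.sqrt (q : ℝ)} := by
    rw [bot_sup_eq]
    exact hz2
  obtain ⟨x, hx, y, hy, hxy⟩ := quad ⊥ _ hd hqirr hz2'
  by_cases hy0 : y = 0
  · rw [hxy, hy0]
    simpa using hx
  · exfalso
    apply part1
    have hform : Real.sqrt q = (z - x) / y := by
      rw [hxy]
      field_simp
      ring
    rw [hform]
    set Kbig := IntermediateField.adjoin ℚ (Set.range fun i => Real.sqrt (p i)) with hKb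
    exact Kbig.div_mem (Kbig.sub_mem hz1 ((bot_le : ⊥ ≤ Kbig) hx)) ((bot_le : ⊥ ≤ Kbig) hy)
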